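/- arXiv:1211.5478 — 8 statements merged into one kernel-verified Lean document; each statement's English description precedes it below -/
import Mathlib

section
/- For every θ ∈ ℝ, if a differentiable curve t ↦ (ω(t), α(t), β(t)) ∈ ℝ³ × ℝ³ × ℝ³ satisfies the Kowalevski two-field equations, then the transformed curve ω' = Θ̃ω, α' = cos θ · (Θ̃α) − sin θ · (Θ̃β), β' = sin θ · (Θ̃α) + cos θ · (Θ̃β) also satisfies the Kowalevski two-field equations. -/
noncomputable section

/-- A differentiable curve `t ↦ (ω(t), α(t), β(t))` (given by its nine components)
is a solution of the Kowalevski two-field equations: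
`2ω̇₁ = ω₂ω₃ + β₃`, `2ω̇₂ = −ω₁ω₃ − α₃`, `ω̇₃ = α₂ − β₁`, `α̇ = α × ω`, `β̇ = β × ω`. -/
def KowSol (ω1 ω2 ω3 a1 a2 a3 b1 b2 b3 : ℝ → ℝ) : Prop :=
  (∀ t, HasDerivAt ω1 ((ω2 t * ω3 t + b3 t) / 2) t) ∧
  (∀ t, HasDerivAt ω2 ((-(ω1 t * ω3 t) - a3 t) / 2) t) ∧
  (∀ t, HasDerivAt ω3 (a2 t - b1 t) t) ∧
  (∀ t, HasDerivAt a1 (a2 t * ω3 t - a3 t * ω2 t) t) ∧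
  (∀ t, HasDerivAt a2 (a3 t * ω1 t - a1 t * ω3 t) t) ∧
  (∀ t, HasDerivAt a3 (a1 t * ω2 t - a2 t * ω1 t) t) ∧
  (∀ t, HasDerivAt b1 (b2 t * ω3 t - b3 t * ω2 t) t) ∧
  (∀ t, HasDerivAt b2 (b3 t * ω1 t - b1 t * ω3 t) t) ∧
  (∀ t, HasDerivAt b3 (b1 t * ω2 t - b2 t * ω1 t) t)

/-- For every `θ ∈ ℝ`, if `(ω, α, β)` solves the Kowalevski two-field equations, so does
the transformed curve `ω' = Θ̃ω`, `α' = cos θ · Θ̃α − sin θ · Θ̃β`,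
`β' = sin θ · Θ̃α + cos θ · Θ̃β`, where `Θ̃` is the rotation about the third axis by `θ`. -/
theorem kowalevski_symmetry (θ : ℝ) (ω1 ω2 ω3 a1 a2 a3 b1 b2 b3 : ℝ → ℝ)
    (h : KowSol ω1 ω2 ω3 a1 a2 a3 b1 b2 b3) :
    KowSol
      (fun t => ω1 t * Real.cos θ - ω2 t * Real.sin θ)
      (fun t => ω1 t * Real.sin θ + ω2 t * Real.cos θ)
      ω3
      (fun t => Real.cos θ * (a1 t * Real.cos θ - a2 t * Real.sin θ)
        - Real.sin θ * (b1 t * Real.cos θ - b2 t * Real.sin θ))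
      (fun t => Real.cos θ * (a1 t * Real.sin θ + a2 t * Real.cos θ)
        - Real.sin θ * (b1 t * Real.sin θ + b2 t * Real.cos θ))
      (fun t => Real.cos θ * a3 t - Real.sin θ * b3 t)
      (fun t => Real.sin θ * (a1 t * Real.cos θ - a2 t * Real.sin θ)
        + Real.cos θ * (b1 t * Real.cos θ - b2 t * Real.sin θ))
      (fun t => Real.sin θ * (a1 t * Real.sin θ + a2 t * Real.cos θ)
        + Real.cos θ * (b1 t * Real.sin θ + b2 t * Real.cos θ))
      (fun t => Real.sin θ * a3 t + Real.cos θ * b3 t) := by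

  obtain ⟨h1, h2, h3, h4, h5, h6, h7, h8, h9⟩ := h
  have hp := Real.sin_sq_add_cos_sq θ
  refine ⟨fun t => ?_, fun t => ?_, fun t => ?_, fun t => ?_, fun t => ?_, fun t => ?_,
    fun t => ?_, fun t => ?_, fun t => ?_⟩
  · refine (((h1 t).mul_const (Real.cos θ)).sub ((h2 t).mul_const (Real.sin θ))).congr_deriv (Eq.symm ?_)
    ring
  · refine (((h1 t).mul_const (Real.sin θ)).add ((h2 t).mul_const (Real.cos θ))).congr_deriv (Eq.symm ?_)
    ring
  · convert h3 t using 1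
    linear_combination (a2 t - b1 t) * hp
  · refine (((((h4 t).mul_const (Real.cos θ)).sub ((h5 t).mul_const (Real.sin θ))).const_mul
      (Real.cos θ)).sub ((((h7 t).mul_const (Real.cos θ)).sub
      ((h8 t).mul_const (Real.sin θ))).const_mul (Real.sin θ))).congr_deriv (Eq.symm ?_)
    ring
  · refine (((((h4 t).mul_const (Real.sin θ)).add ((h5 t).mul_const (Real.cos θ))).const_mul
      (Real.cos θ)).sub ((((h7 t).mul_const (Real.sin θ)).add
      ((h8 t).mul_const (Real.cos θ))).const_mul (Real.sin θ))).congr_deriv (Eq.symm ?_)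
    ring
  · refine (((h6 t).const_mul (Real.cos θ)).sub ((h9 t).const_mul (Real.sin θ))).congr_deriv (Eq.symm ?_)
    linear_combination (Real.cos θ * (ω2 t * a1 t - ω1 t * a2 t)
      + Real.sin θ * (ω1 t * b2 t - ω2 t * b1 t)) * hp
  · refine (((((h4 t).mul_const (Real.cos θ)).sub ((h5 t).mul_const (Real.sin θ))).const_mul
      (Real.sin θ)).add ((((h7 t).mul_const (Real.cos θ)).sub
      ((h8 t).mul_const (Real.sin θ))).const_mul (Real.cos θ))).congr_deriv (Eq.symm ?_)
    ring
  · refine (((((h4 t).mul_const (Real.sin θ)).add ((h5 t).mul_const (Real.cos θ))).const_mul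
      (Real.sin θ)).add ((((h7 t).mul_const (Real.sin θ)).add
      ((h8 t).mul_const (Real.cos θ))).const_mul (Real.cos θ))).congr_deriv (Eq.symm ?_)
    ring
  · refine (((h6 t).const_mul (Real.sin θ)).add ((h9 t).const_mul (Real.cos θ))).congr_deriv (Eq.symm ?_)
    linear_combination (Real.sin θ * (ω2 t * a1 t - ω1 t * a2 t)
      + Real.cos θ * (ω2 t * b1 t - ω1 t * b2 t)) * hp
end
end

section
/- Along any differentiable solution of the Kowalevski two-field equations, the complex-valued functions f = w₁² + x₁ and g = w₂² + x₂ satisfy df/dt = −i ω₃ f and dg/dt = i ω₃ g, where w₁ = ω₁ + iω₂, w₂ = ω₁ − iω₂, x₁ = (α₁ − β₂) + i(α₂ + β₁), x₂ = (α₁ − β₂) − i(α₂ + β₁). Consequently the set ℳ = {w₁² + x₁ = 0, w₂² + x₂ = 0} (the first critical subsystem) is invariant under the flow, and K = f·g is a first integral. -/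
noncomputable section

/-- `f = w₁² + x₁` with `w₁ = ω₁ + iω₂`, `x₁ = (α₁ − β₂) + i(α₂ + β₁)`. -/
def fK (ω1 ω2 a1 a2 b1 b2 : ℝ → ℝ) (t : ℝ) : ℂ :=
  ((ω1 t : ℂ) + Complex.I * (ω2 t : ℂ)) ^ 2
    + (((a1 t - b2 t : ℝ) : ℂ) + Complex.I * ((a2 t + b1 t : ℝ) : ℂ))

/-- `g = w₂² + x₂` with `w₂ = ω₁ − iω₂`, `x₂ = (α₁ − β₂) − i(α₂ + β₁)`. -/
def gK (ω1 ω2 a1 a2 b1 b2 : ℝ → ℝ) (t : ℝ) : ℂ :=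
  ((ω1 t : ℂ) - Complex.I * (ω2 t : ℂ)) ^ 2
    + (((a1 t - b2 t : ℝ) : ℂ) - Complex.I * ((a2 t + b1 t : ℝ) : ℂ))

/-- Along any solution of the Kowalevski two-field equations, `f = w₁² + x₁` and
`g = w₂² + x₂` satisfy `f' = −iω₃ f`, `g' = iω₃ g`; consequently the first critical
subsystem `ℳ = {f = 0, g = 0}` is invariant under the flow and `K = f·g` is a first
integral. -/
theorem first_critical_subsystem_invariant (ω1 ω2 ω3 a1 a2 a3 b1 b2 b3 : ℝ → ℝ)
    (h : KowSol ω1 ω2 ω3 a1 a2 a3 b1 b2 b3) :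
    (∀ t, HasDerivAt (fK ω1 ω2 a1 a2 b1 b2)
        (-Complex.I * (ω3 t : ℂ) * fK ω1 ω2 a1 a2 b1 b2 t) t) ∧
    (∀ t, HasDerivAt (gK ω1 ω2 a1 a2 b1 b2)
        (Complex.I * (ω3 t : ℂ) * gK ω1 ω2 a1 a2 b1 b2 t) t) ∧
    (∀ t₀, fK ω1 ω2 a1 a2 b1 b2 t₀ = 0 → gK ω1 ω2 a1 a2 b1 b2 t₀ = 0 →
      ∀ t, fK ω1 ω2 a1 a2 b1 b2 t = 0 ∧ gK ω1 ω2 a1 a2 b1 b2 t = 0) ∧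
    (∀ t, HasDerivAt (fun t => fK ω1 ω2 a1 a2 b1 b2 t * gK ω1 ω2 a1 a2 b1 b2 t) 0 t) := by

  obtain ⟨h1, h2, h3, ha1, ha2, ha3, hb1, hb2, hb3⟩ := h
  have hf : ∀ t, HasDerivAt (fK ω1 ω2 a1 a2 b1 b2)
      (-Complex.I * (ω3 t : ℂ) * fK ω1 ω2 a1 a2 b1 b2 t) t := by
    intro t
    have hw : HasDerivAt (fun t => (ω1 t : ℂ) + Complex.I * (ω2 t : ℂ))
        ((((ω2 t * ω3 t + b3 t) / 2 : ℝ) : ℂ)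
          + Complex.I * (((-(ω1 t * ω3 t) - a3 t) / 2 : ℝ) : ℂ)) t :=
      ((h1 t).ofReal_comp).add (((h2 t).ofReal_comp).const_mul Complex.I)
    have hx : HasDerivAt
        (fun t => (((a1 t - b2 t : ℝ)) : ℂ) + Complex.I * (((a2 t + b1 t : ℝ)) : ℂ))
        ((((a2 t * ω3 t - a3 t * ω2 t) - (b3 t * ω1 t - b1 t * ω3 t) : ℝ) : ℂ)
          + Complex.I * (((a3 t * ω1 t - a1 t * ω3 t) + (b2 t * ω3 t - b3 t * ω2 t) : ℝ) : ℂ)) t :=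
      (((ha1 t).sub (hb2 t)).ofReal_comp).add
        ((((ha2 t).add (hb1 t)).ofReal_comp).const_mul Complex.I)
    have H := (hw.mul hw).add hx
    convert H using 1
    · rfl
    · funext s
      simp only [fK, Pi.add_apply, Pi.mul_apply]
      push_cast
      ring
    · simp only [fK]
      push_cast
      linear_combination (-((ω3 t : ℂ) * (ω2 t : ℂ) ^ 2 * Complex.I)
        - ((ω1 t : ℂ) * (ω2 t : ℂ) * (ω3 t : ℂ) - (a3 t : ℂ) * (ω2 t : ℂ)
          + (a2 t : ℂ) * (ω3 t : ℂ) + (b1 t : ℂ) * (ω3 t : ℂ))) * Complex.I_sq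
  have hgf : ∀ t, gK ω1 ω2 a1 a2 b1 b2 t = star (fK ω1 ω2 a1 a2 b1 b2 t) := by
    intro t
    simp [fK, gK, Complex.conj_ofReal, Complex.conj_I]
    try ring
  have hg : ∀ t, HasDerivAt (gK ω1 ω2 a1 a2 b1 b2)
      (Complex.I * (ω3 t : ℂ) * gK ω1 ω2 a1 a2 b1 b2 t) t := by
    intro t
    have := (hf t).star
    have heq : (fun t => star (fK ω1 ω2 a1 a2 b1 b2 t)) = gK ω1 ω2 a1 a2 b1 b2 := by
      funext s; rw [hgf s]
    rw [heq] at this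
    convert this using 1
    · rfl
    rw [hgf t]
    simp [Complex.conj_ofReal, Complex.conj_I]
    try ring
  refine ⟨hf, hg, ?_, ?_⟩
  · intro t₀ hf0 _ t
    have hφ : ∀ s, HasDerivAt
        (fun s => fK ω1 ω2 a1 a2 b1 b2 s * star (fK ω1 ω2 a1 a2 b1 b2 s)) 0 s := by
      intro s
      have := (hf s).mul (hf s).star
      convert this using 1
      · rfl
      · rfl
      simp [Complex.conj_ofReal, Complex.conj_I]
      try ring
    have hconst : ∀ s, fK ω1 ω2 a1 a2 b1 b2 s * star (fK ω1 ω2 a1 a2 b1 b2 s)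
        = fK ω1 ω2 a1 a2 b1 b2 t₀ * star (fK ω1 ω2 a1 a2 b1 b2 t₀) := by
      intro s
      exact is_const_of_deriv_eq_zero (fun x => (hφ x).differentiableAt)
        (fun x => (hφ x).deriv) s t₀
    have h0 : fK ω1 ω2 a1 a2 b1 b2 t * star (fK ω1 ω2 a1 a2 b1 b2 t) = 0 := by
      rw [hconst t, hf0]; simp
    have hft : fK ω1 ω2 a1 a2 b1 b2 t = 0 := by
      rcases mul_eq_zero.mp h0 with h' | h'
      · exact h'
      · exact star_eq_zero.mp (by simpa using h')
    exact ⟨hft, by rw [hgf t, hft]; simp⟩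
  · intro t
    have := (hf t).mul (hg t)
    convert this using 1
    · rfl
    · rfl
    ring
end
end

section
/- Let a > b > 0, p² = a² + b², r² = a² − b², and let complex numbers x₁, x₂, y₁, y₂, z₁, z₂, w₁, w₂ (with x₂ = conj x₁, y₂ = conj y₁, z₂ = conj z₁, w₂ = conj w₁) and real w₃, s ≠ 0, τ satisfy the constraints z₁² + x₁y₂ = r², z₂² + x₂y₁ = r², x₁x₂ + y₁y₂ + 2z₁z₂ = 2p², the linear relations (y₂ + 2s)w₁ + x₁w₂ + z₁w₃ = 0, x₂w₁ + (y₁ + 2s)w₂ + z₂w₃ = 0, x₂z₁w₁ + x₁z₂w₂ + (τ − x₁x₂)w₃ = 0, and 2s·w₁w₂ − (x₁x₂ + z₁z₂) + τ = 0, with w₁w₂ ≠ 0. Then the values of the first integrals H = ½w₃² + w₁w₂ − ½(y₁ + y₂), K = (w₁² + x₁)(w₂² + x₂), and G = ¼(p² − x₁x₂)w₃² + ½(x₂z₁w₁ + x₁z₂w₂)w₃ + ¼(x₂w₁ + y₁w₂)(y₂w₁ + x₁w₂) − ¼p²(y₁ + y₂) + ¼r²(x₁ + x₂) are h = (p² −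 τ)/(2s) + s, k = (τ² − 2p²τ + r⁴)/(4s²) + τ, g = (p⁴ − r⁴)/(4s) + ½(p² − τ)s. -/
noncomputable section

open Complex

/-- On the third critical subsystem (described by the listed linear relations and
`2s·w₁w₂ − (x₁x₂ + z₁z₂) + τ = 0`), the first integrals `H`, `K`, `G` take the values
`h = (p² − τ)/(2s) + s`, `k = (τ² − 2p²τ + r⁴)/(4s²) + τ`,
`g = (p⁴ − r⁴)/(4s) + ½(p² − τ)s`. -/
theorem third_subsystem_integral_values
    (a b p r s τ : ℝ) (hb : 0 < b) (hab : b < a)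
    (hp : p ^ 2 = a ^ 2 + b ^ 2) (hr : r ^ 2 = a ^ 2 - b ^ 2) (hs : s ≠ 0)
    (x₁ x₂ y₁ y₂ z₁ z₂ w₁ w₂ : ℂ) (w₃ : ℝ)
    (hx : x₂ = starRingEnd ℂ x₁) (hy : y₂ = starRingEnd ℂ y₁)
    (hz : z₂ = starRingEnd ℂ z₁) (hw : w₂ = starRingEnd ℂ w₁)
    (hgeo1 : z₁ ^ 2 + x₁ * y₂ = (r : ℂ) ^ 2)
    (hgeo2 : z₂ ^ 2 + x₂ * y₁ = (r : ℂ) ^ 2)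
    (hgeo3 : x₁ * x₂ + y₁ * y₂ + 2 * z₁ * z₂ = 2 * (p : ℂ) ^ 2)
    (hlin1 : (y₂ + 2 * (s : ℂ)) * w₁ + x₁ * w₂ + z₁ * (w₃ : ℂ) = 0)
    (hlin2 : x₂ * w₁ + (y₁ + 2 * (s : ℂ)) * w₂ + z₂ * (w₃ : ℂ) = 0)
    (hlin3 : x₂ * z₁ * w₁ + x₁ * z₂ * w₂ + ((τ : ℂ) - x₁ * x₂) * (w₃ : ℂ) = 0)
    (hquad : 2 * (s : ℂ) * (w₁ * w₂) - (x₁ * x₂ + z₁ * z₂) + (τ : ℂ) = 0)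
    (hw0 : w₁ * w₂ ≠ 0) :
    (1 / 2) * (w₃ : ℂ) ^ 2 + w₁ * w₂ - (1 / 2) * (y₁ + y₂)
        = ((p ^ 2 - τ) / (2 * s) + s : ℝ) ∧
    (w₁ ^ 2 + x₁) * (w₂ ^ 2 + x₂)
        = ((τ ^ 2 - 2 * p ^ 2 * τ + r ^ 4) / (4 * s ^ 2) + τ : ℝ) ∧
    (1 / 4) * ((p : ℂ) ^ 2 - x₁ * x₂) * (w₃ : ℂ) ^ 2
        + (1 / 2) * (x₂ * z₁ * w₁ + x₁ * z₂ * w₂) * (w₃ : ℂ)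
        + (1 / 4) * (x₂ * w₁ + y₁ * w₂) * (y₂ * w₁ + x₁ * w₂)
        - (1 / 4) * (p : ℂ) ^ 2 * (y₁ + y₂)
        + (1 / 4) * (r : ℂ) ^ 2 * (x₁ + x₂)
        = ((p ^ 4 - r ^ 4) / (4 * s) + (1 / 2) * (p ^ 2 - τ) * s : ℝ) := by
  have hsC : (s : ℂ) ≠ 0 := Complex.ofReal_ne_zero.mpr hs
  have k1 : w₁ * w₂ * ((s:ℂ)*(w₃:ℂ)^2 + 2*(s:ℂ)*(w₁*w₂) - (s:ℂ)*y₁ - (s:ℂ)*y₂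
      - (p:ℂ)^2 + (τ:ℂ) - 2*(s:ℂ)^2) = 0 := by
    linear_combination ((1/2:ℂ)*w₁*w₂) * hgeo3 + ((-1:ℂ)*w₂*(s:ℂ) + (-1/2:ℂ)*y₁*w₂) * hlin1 + ((1/2:ℂ)*z₁*(w₃:ℂ) + (1/2:ℂ)*x₁*w₂) * hlin2 + ((-1/2:ℂ)*(w₃:ℂ)) * hlin3 + ((1/2:ℂ)*(w₃:ℂ)^2 + (1:ℂ)*w₁*w₂) * hquad
  have k2 : w₁ * w₂ * (4*(s:ℂ)^2*((w₁^2+x₁)*(w₂^2+x₂)) - (τ:ℂ)^2 + 2*(p:ℂ)^2*(τ:ℂ)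
      - (r:ℂ)^4 - 4*(s:ℂ)^2*(τ:ℂ)) = 0 := by
    linear_combination ((-1:ℂ)*w₁*w₂*(r:ℂ)^2 + (2:ℂ)*z₂^2*w₁*w₂ + (-2:ℂ)*x₂*w₁*w₂*(s:ℂ) + (-1:ℂ)*x₂*z₂*w₁*(w₃:ℂ) + (1:ℂ)*x₂*y₁*w₁*w₂ + (-1:ℂ)*x₂^2*w₁^2) * hgeo1 + ((2:ℂ)*w₁*w₂*(r:ℂ)^2 + (4/3:ℂ)*z₁*w₁*(w₃:ℂ)*(s:ℂ) + (2/3:ℂ)*z₁^2*(w₃:ℂ)^2 + (-1:ℂ)*z₁^2*w₁*w₂ + (2/3:ℂ)*y₂*z₁*w₁*(w₃:ℂ) + (2:ℂ)*x₁*w₁*w₂*(s:ℂ) + (5/3:ℂ)*x₁*z₁*w₂*(w₃:ℂ) + (1:ℂ)*x₁^2*w₂^2) * hgeo2 + ((4:ℂ)*w₁*w₂*(s:ℂ)^2 + (2:ℂ)*w₁^2*w₂^2*(s:ℂ) + (-8/3:ℂ)*z₂*w₁*(w₃:ℂ)*(s:ℂ) + (4:ℂ)*z₁*w₂*(w₃:ℂ)*(s:ℂ)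 + (-1/3:ℂ)*z₁*z₂*(w₃:ℂ)^2 + (-1:ℂ)*z₁*z₂*w₁*w₂ + (2:ℂ)*y₂*w₁*w₂*(s:ℂ) + (-4/3:ℂ)*y₂*z₂*w₁*(w₃:ℂ) + (1:ℂ)*y₁*z₁*w₂*(w₃:ℂ) + (2:ℂ)*x₂*w₁^2*(s:ℂ) + (2:ℂ)*x₂*z₁*w₁*(w₃:ℂ) + (1:ℂ)*x₂*y₂*w₁^2 + (2:ℂ)*x₁*w₂^2*(s:ℂ) + (-4/3:ℂ)*x₁*z₂*w₂*(w₃:ℂ)) * hgeo3 + ((4:ℂ)*w₂*(s:ℂ)*(p:ℂ)^2 + (-8/3:ℂ)*z₂*(w₃:ℂ)*(p:ℂ)^2 + (8/3:ℂ)*z₂*(w₃:ℂ)*(τ:ℂ) + (2/3:ℂ)*z₁*(w₃:ℂ)*(r:ℂ)^2 + (-6:ℂ)*z₁*z₂*w₂*(s:ℂ) + (1:ℂ)*z₁*z₂^2*(w₃:ℂ) + (-2:ℂ)*y₁*w₁*w₂^2*(s:ℂ) + (-2:ℂ)*y₁*y₂*w₂*(s:ℂ) + (4/3:ℂ)*y₁*y₂*z₂*(w₃:ℂ)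 + (2:ℂ)*x₂*w₁*(p:ℂ)^2 + (-1/3:ℂ)*x₂*z₁*z₂*w₁ + (-2/3:ℂ)*x₂*y₁*z₁*(w₃:ℂ) + (-1:ℂ)*x₂*y₁*y₂*w₁ + (1:ℂ)*x₁*w₂*(r:ℂ)^2 + (2/3:ℂ)*x₁*z₂^2*w₂ + (-1/3:ℂ)*x₁*x₂*z₂*(w₃:ℂ)) * hlin1 + ((4:ℂ)*w₁^2*w₂*(s:ℂ)^2 + (2:ℂ)*z₁*(w₃:ℂ)*(p:ℂ)^2 + (-4/3:ℂ)*z₁*(w₃:ℂ)*(τ:ℂ) + (-1:ℂ)*z₁^2*z₂*(w₃:ℂ) + (1:ℂ)*y₂*z₁*z₂*w₁ + (-1:ℂ)*y₁*y₂*z₁*(w₃:ℂ) + (-1:ℂ)*x₂*w₁*(r:ℂ)^2 + (-1/3:ℂ)*x₂*z₁^2*w₁ + (-1:ℂ)*x₁*w₂*(τ:ℂ) + (2/3:ℂ)*x₁*z₁*z₂*w₂ + (-2:ℂ)*x₁*x₂*w₁*(s:ℂ) + (-2/3:ℂ)*x₁*x₂*z₁*(w₃:ℂ)) * hlin2 +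 ((-10/3:ℂ)*z₂*w₁*(s:ℂ) + (8/3:ℂ)*z₁*w₂*(s:ℂ) + (-4/3:ℂ)*z₁*z₂*(w₃:ℂ) + (-8/3:ℂ)*y₂*z₂*w₁ + (1/3:ℂ)*y₁*z₁*w₂ + (4/3:ℂ)*x₂*z₁*w₁ + (-5/3:ℂ)*x₁*z₂*w₂) * hlin3 + ((2:ℂ)*w₁*w₂*(p:ℂ)^2 + (-1:ℂ)*w₁*w₂*(τ:ℂ) + (-4:ℂ)*w₁*w₂*(s:ℂ)^2 + (2:ℂ)*w₁^2*w₂^2*(s:ℂ) + (-2:ℂ)*z₂*w₁*(w₃:ℂ)*(s:ℂ) + (-1:ℂ)*z₁*z₂*w₁*w₂ + (1:ℂ)*y₁*z₁*w₂*(w₃:ℂ) + (2:ℂ)*x₁*w₂^2*(s:ℂ) + (1:ℂ)*x₁*y₁*w₂^2) * hquad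
  have k3 : w₁ * w₂ * ((s:ℂ)*(((p:ℂ)^2 - x₁*x₂)*(w₃:ℂ)^2 + 2*(x₂*z₁*w₁ + x₁*z₂*w₂)*(w₃:ℂ)
      + (x₂*w₁ + y₁*w₂)*(y₂*w₁ + x₁*w₂) - (p:ℂ)^2*(y₁+y₂) + (r:ℂ)^2*(x₁+x₂))
      - ((p:ℂ)^4 - (r:ℂ)^4) - 2*((p:ℂ)^2 - (τ:ℂ))*(s:ℂ)^2) = 0 := by
    linear_combination ((-1:ℂ)*z₂^2*w₁*w₂ + (1/2:ℂ)*x₂*z₂*w₁*(w₃:ℂ) + (-1/2:ℂ)*x₂*y₁*w₁*w₂ + (1/2:ℂ)*x₂^2*w₁^2) * hgeo1 + ((-1:ℂ)*w₁*w₂*(r:ℂ)^2 + (-1/3:ℂ)*z₁*w₁*(w₃:ℂ)*(s:ℂ) + (-1/6:ℂ)*z₁^2*(w₃:ℂ)^2 + (-1/6:ℂ)*y₂*z₁*w₁*(w₃:ℂ) + (-1:ℂ)*x₁*w₁*w₂*(s:ℂ) + (-1/6:ℂ)*x₁*z₁*w₂*(w₃:ℂ)) * hgeo2 + ((1/2:ℂ)*w₁*w₂*(p:ℂ)^2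 + (-1:ℂ)*w₁*w₂*(w₃:ℂ)^2*(s:ℂ) + (1/6:ℂ)*z₂*w₁*(w₃:ℂ)*(s:ℂ) + (-2:ℂ)*z₁*w₂*(w₃:ℂ)*(s:ℂ) + (-5/12:ℂ)*z₁*z₂*(w₃:ℂ)^2 + (1/2:ℂ)*z₁*z₂*w₁*w₂ + (1/12:ℂ)*y₂*z₂*w₁*(w₃:ℂ) + (-1:ℂ)*y₁*z₁*w₂*(w₃:ℂ) + (-1:ℂ)*x₂*w₁^2*(s:ℂ) + (-1:ℂ)*x₂*z₁*w₁*(w₃:ℂ) + (-1/2:ℂ)*x₂*y₂*w₁^2 + (7/12:ℂ)*x₁*z₂*w₂*(w₃:ℂ)) * hgeo3 + ((-1:ℂ)*w₂*(s:ℂ)*(p:ℂ)^2 + (1/6:ℂ)*z₂*(w₃:ℂ)*(p:ℂ)^2 + (-2/3:ℂ)*z₂*(w₃:ℂ)*(τ:ℂ) + (-1/6:ℂ)*z₁*(w₃:ℂ)*(r:ℂ)^2 + (1/2:ℂ)*z₁*z₂*w₂*(s:ℂ) + (1/4:ℂ)*z₁*z₂^2*(w₃:ℂ) + (-1/2:ℂ)*y₁*w₂*(p:ℂ)^2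 + (1:ℂ)*y₁*w₁*w₂^2*(s:ℂ) + (-1/4:ℂ)*y₁*z₁*z₂*w₂ + (-1/12:ℂ)*y₁*y₂*z₂*(w₃:ℂ) + (-1:ℂ)*x₂*w₁*(p:ℂ)^2 + (1:ℂ)*x₂*w₁^2*w₂*(s:ℂ) + (7/12:ℂ)*x₂*z₁*z₂*w₁ + (1/6:ℂ)*x₂*y₁*z₁*(w₃:ℂ) + (1/2:ℂ)*x₂*y₁*y₂*w₁ + (1/3:ℂ)*x₁*z₂^2*w₂ + (1/12:ℂ)*x₁*x₂*z₂*(w₃:ℂ)) * hlin1 + ((-2:ℂ)*w₁^2*w₂*(s:ℂ)^2 + (-3/2:ℂ)*z₁*(w₃:ℂ)*(p:ℂ)^2 + (5/6:ℂ)*z₁*(w₃:ℂ)*(τ:ℂ) + (1:ℂ)*z₁*w₁*w₂*(w₃:ℂ)*(s:ℂ) + (1/2:ℂ)*z₁*z₂*w₁*(s:ℂ) + (5/4:ℂ)*z₁^2*z₂*(w₃:ℂ) + (-1/4:ℂ)*y₂*z₁*z₂*w₁ + (1:ℂ)*y₁*y₂*z₁*(w₃:ℂ) + (1/2:ℂ)*x₂*w₁*(r:ℂ)^2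 + (1/3:ℂ)*x₂*z₁^2*w₁ + (1/2:ℂ)*x₁*w₂*(p:ℂ)^2 + (1/12:ℂ)*x₁*z₁*z₂*w₂ + (1:ℂ)*x₁*x₂*w₁*(s:ℂ) + (1/6:ℂ)*x₁*x₂*z₁*(w₃:ℂ)) * hlin2 + ((1/2:ℂ)*(w₃:ℂ)*(p:ℂ)^2 + (1/3:ℂ)*z₂*w₁*(s:ℂ) + (-2/3:ℂ)*z₁*w₂*(s:ℂ) + (-2/3:ℂ)*z₁*z₂*(w₃:ℂ) + (2/3:ℂ)*y₂*z₂*w₁ + (1/6:ℂ)*y₁*z₁*w₂ + (-1/2:ℂ)*y₁*y₂*(w₃:ℂ) + (-5/6:ℂ)*x₂*z₁*w₁ + (-1/3:ℂ)*x₁*z₂*w₂) * hlin3 + ((-1/2:ℂ)*(w₃:ℂ)^2*(p:ℂ)^2 + (2:ℂ)*w₁*w₂*(s:ℂ)^2 + (1:ℂ)*z₂*w₁*(w₃:ℂ)*(s:ℂ) + (-1:ℂ)*z₁*w₂*(w₃:ℂ)*(s:ℂ) + (1/2:ℂ)*z₁*z₂*(w₃:ℂ)^2 + (-1:ℂ)*y₁*z₁*w₂*(w₃:ℂ)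 + (1/2:ℂ)*y₁*y₂*(w₃:ℂ)^2 + (1:ℂ)*x₁*z₂*w₂*(w₃:ℂ)) * hquad
  have e1 := (mul_eq_zero.mp k1).resolve_left hw0
  have e2 := (mul_eq_zero.mp k2).resolve_left hw0
  have e3 := (mul_eq_zero.mp k3).resolve_left hw0
  refine ⟨?_, ?_, ?_⟩
  · push_cast
    field_simp
    linear_combination e1
  · push_cast
    field_simp
    linear_combination e2
  · push_cast
    field_simp
    linear_combination 2*e3
end
end

section
/- Let p, r ∈ ℝ and let complex numbers x₁, x₂, y₁, y₂, z₁, z₂ satisfy z₁² + x₁y₂ = r², z₂² + x₂y₁ = r², and x₁x₂ + y₁y₂ + 2z₁z₂ = 2p². Then: (i) r²(x₁y₂ + x₂y₁) = r⁴ + 2p²·x₁x₂ − (x₁x₂ + z₁z₂)²; (ii) r²(z₁ + z₂)² = (x₁x₂ + z₁z₂ + r²)² − 2(p² + r²)·x₁x₂; (iii) r²(z₁ − z₂)² = (x₁x₂ + z₁z₂ − r²)² − 2(p² − r²)·x₁x₂. -/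
noncomputable section

/-- From the geometric constraints in the Kowalevski complex variables
(`z₁² + x₁y₂ = r²`, `z₂² + x₂y₁ = r²`, `x₁x₂ + y₁y₂ + 2z₁z₂ = 2p²`) one gets
(i) `r²(x₁y₂ + x₂y₁) = r⁴ + 2p²x₁x₂ − (x₁x₂ + z₁z₂)²`;
(ii) `r²(z₁ + z₂)² = (x₁x₂ + z₁z₂ + r²)² − 2(p² + r²)x₁x₂`;
(iii) `r²(z₁ − z₂)² = (x₁x₂ + z₁z₂ − r²)² − 2(p² − r²)x₁x₂`. -/
theorem geometric_constraint_identities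
    (p r : ℝ) (x₁ x₂ y₁ y₂ z₁ z₂ : ℂ)
    (h1 : z₁ ^ 2 + x₁ * y₂ = (r : ℂ) ^ 2)
    (h2 : z₂ ^ 2 + x₂ * y₁ = (r : ℂ) ^ 2)
    (h3 : x₁ * x₂ + y₁ * y₂ + 2 * z₁ * z₂ = 2 * (p : ℂ) ^ 2) :
    (r : ℂ) ^ 2 * (x₁ * y₂ + x₂ * y₁)
        = (r : ℂ) ^ 4 + 2 * (p : ℂ) ^ 2 * (x₁ * x₂) - (x₁ * x₂ + z₁ * z₂) ^ 2 ∧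
    (r : ℂ) ^ 2 * (z₁ + z₂) ^ 2
        = (x₁ * x₂ + z₁ * z₂ + (r : ℂ) ^ 2) ^ 2
          - 2 * ((p : ℂ) ^ 2 + (r : ℂ) ^ 2) * (x₁ * x₂) ∧
    (r : ℂ) ^ 2 * (z₁ - z₂) ^ 2
        = (x₁ * x₂ + z₁ * z₂ - (r : ℂ) ^ 2) ^ 2
          - 2 * ((p : ℂ) ^ 2 - (r : ℂ) ^ 2) * (x₁ * x₂) := by
  refine ⟨?_, ?_, ?_⟩
  · linear_combination (x₁*x₂) * h3 + ((r:ℂ)^2 - x₂*y₁) * h1 + z₁^2 * h2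
  · linear_combination (x₁*x₂) * h3 + (2*(r:ℂ)^2 - x₂*y₁) * h1 + (z₁^2 + (r:ℂ)^2) * h2 - 2*((x₁*x₂) * h3 + ((r:ℂ)^2 - x₂*y₁) * h1 + z₁^2 * h2)
  · linear_combination (x₁*x₂) * h3 + (2*(r:ℂ)^2 - x₂*y₁) * h1 + (z₁^2 + (r:ℂ)^2) * h2 - 2*((x₁*x₂) * h3 + ((r:ℂ)^2 - x₂*y₁) * h1 + z₁^2 * h2)
end
end

section
/- Let s, τ, p, r, χ, σ ∈ ℝ satisfy σ = τ² − 2p²τ + r⁴ and 4s²χ² = σ + 4s²τ. Then for all real x, ξ the polynomial identity P² − Φ₁Φ₂Ψ₁Ψ₂ = 4x²(τξ² + σx² − τσ)Q² holds, where Φ₁ = (ξ + τ + r²)² − 2(p² + r²)x², Φ₂ = (ξ + τ − r²)² − 2(p² − r²)x², Ψ₁ = ξ² − 4s²(x + χ)², Ψ₂ = ξ² − 4s²(x − χ)², Q = (ξ + τ + 2s² − p²)² − 4s²x² − (p² − 2s²)² + r⁴, and P = 4s²(x² − χ²)[2(τ − p²)x² − τ² + r⁴] + 8s²[(τ − 2χ²)x²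 + τχ²]ξ − 2[(τ − p² − 2s²)x² + τ(p² − 2s²) − r⁴]ξ² − 2τξ³ − ξ⁴. -/
noncomputable section

/-- The key polynomial identity `P² − Φ₁Φ₂Ψ₁Ψ₂ = 4x²(τξ² + σx² − τσ)Q²` used in the
separation of variables for the third critical subsystem. -/
theorem key_polynomial_identity
    (s τ p r χ σ : ℝ)
    (hσ : σ = τ ^ 2 - 2 * p ^ 2 * τ + r ^ 4)
    (hχ : 4 * s ^ 2 * χ ^ 2 = σ + 4 * s ^ 2 * τ) :
    ∀ x ξ : ℝ,
      (4 * s ^ 2 * (x ^ 2 - χ ^ 2) * (2 * (τ - p ^ 2) * x ^ 2 - τ ^ 2 + r ^ 4)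
        + 8 * s ^ 2 * ((τ - 2 * χ ^ 2) * x ^ 2 + τ * χ ^ 2) * ξ
        - 2 * ((τ - p ^ 2 - 2 * s ^ 2) * x ^ 2 + τ * (p ^ 2 - 2 * s ^ 2) - r ^ 4) * ξ ^ 2
        - 2 * τ * ξ ^ 3 - ξ ^ 4) ^ 2
      - ((ξ + τ + r ^ 2) ^ 2 - 2 * (p ^ 2 + r ^ 2) * x ^ 2)
        * ((ξ + τ - r ^ 2) ^ 2 - 2 * (p ^ 2 - r ^ 2) * x ^ 2)
        * (ξ ^ 2 - 4 * s ^ 2 * (x + χ) ^ 2)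
        * (ξ ^ 2 - 4 * s ^ 2 * (x - χ) ^ 2)
      = 4 * x ^ 2 * (τ * ξ ^ 2 + σ * x ^ 2 - τ * σ)
        * ((ξ + τ + 2 * s ^ 2 - p ^ 2) ^ 2 - 4 * s ^ 2 * x ^ 2
            - (p ^ 2 - 2 * s ^ 2) ^ 2 + r ^ 4) ^ 2 := by
  subst hσ
  intro x ξ
  linear_combination ((0) + (2)*ξ ^ 6 + (8)*x ^ 2*ξ ^ 5 + (-3)*r ^ 4*ξ ^ 4 + (8)*r ^ 4*x ^ 4*ξ ^ 2 + (4)*r ^ 8*x ^ 4 + (-12)*p ^ 2*x ^ 2*ξ ^ 4 + (-16)*p ^ 2*x ^ 4*ξ ^ 3 + (-16)*p ^ 2*r ^ 4*x ^ 4*ξ ^ 1 + (16)*p ^ 4*x ^ 4*ξ ^ 2 + (4)*τ ^ 1*ξ ^ 5 + (20)*τ ^ 1*x ^ 2*ξ ^ 4 + (16)*τ ^ 1*x ^ 4*ξ ^ 3 + (-4)*τ ^ 1*r ^ 4*x ^ 2*ξ ^ 2 + (16)*τ ^ 1*r ^ 4*x ^ 4*ξ ^ 1 + (-4)*τ ^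 1*r ^ 8*x ^ 2 + (2)*τ ^ 1*p ^ 2*ξ ^ 4 + (-48)*τ ^ 1*p ^ 2*x ^ 4*ξ ^ 2 + (16)*τ ^ 1*p ^ 2*r ^ 4*x ^ 2*ξ ^ 1 + (-16)*τ ^ 1*p ^ 2*r ^ 4*x ^ 4 + (-16)*τ ^ 1*p ^ 4*x ^ 2*ξ ^ 2 + (32)*τ ^ 1*p ^ 4*x ^ 4*ξ ^ 1 + (1)*τ ^ 2*ξ ^ 4 + (24)*τ ^ 2*x ^ 4*ξ ^ 2 + (-16)*τ ^ 2*r ^ 4*x ^ 2*ξ ^ 1 + (8)*τ ^ 2*r ^ 4*x ^ 4 + (40)*τ ^ 2*p ^ 2*x ^ 2*ξ ^ 2 + (-48)*τ ^ 2*p ^ 2*x ^ 4*ξ ^ 1 + (16)*τ ^ 2*p ^ 2*r ^ 4*x ^ 2 + (-32)*τ ^ 2*p ^ 4*x ^ 2*ξ ^ 1 + (16)*τ ^ 2*p ^ 4*x ^ 4 + (-20)*τ ^ 3*x ^ 2*ξ ^ 2 + (16)*τ ^ 3*x ^ 4*ξ ^ 1 + (-8)*τ ^ 3*r ^ 4*x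 ^ 2 + (48)*τ ^ 3*p ^ 2*x ^ 2*ξ ^ 1 + (-16)*τ ^ 3*p ^ 2*x ^ 4 + (-16)*τ ^ 3*p ^ 4*x ^ 2 + (-16)*τ ^ 4*x ^ 2*ξ ^ 1 + (4)*τ ^ 4*x ^ 4 + (16)*τ ^ 4*p ^ 2*x ^ 2 + (-4)*τ ^ 5*x ^ 2 + (8)*s ^ 2*x ^ 2*ξ ^ 4 + (-32)*s ^ 2*x ^ 4*ξ ^ 3 + (-4)*s ^ 2*χ ^ 2*ξ ^ 4 + (64)*s ^ 2*χ ^ 2*x ^ 4*ξ ^ 2 + (-24)*s ^ 2*r ^ 4*x ^ 2*ξ ^ 2 + (32)*s ^ 2*r ^ 4*x ^ 4*ξ ^ 1 + (-32)*s ^ 2*r ^ 4*x ^ 6 + (8)*s ^ 2*r ^ 4*χ ^ 2*ξ ^ 2 + (16)*s ^ 2*r ^ 4*χ ^ 2*x ^ 4 + (-16)*s ^ 2*p ^ 2*x ^ 4*ξ ^ 2 + (64)*s ^ 2*p ^ 2*x ^ 6*ξ ^ 1 + (16)*s ^ 2*p ^ 2*χ ^ 2*x ^ 2*ξ ^ 2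 + (-64)*s ^ 2*p ^ 2*χ ^ 2*x ^ 4*ξ ^ 1 + (-4)*s ^ 2*τ ^ 1*ξ ^ 4 + (16)*s ^ 2*τ ^ 1*x ^ 2*ξ ^ 3 + (-16)*s ^ 2*τ ^ 1*x ^ 4*ξ ^ 2 + (-64)*s ^ 2*τ ^ 1*x ^ 6*ξ ^ 1 + (-16)*s ^ 2*τ ^ 1*χ ^ 2*ξ ^ 3 + (-64)*s ^ 2*τ ^ 1*χ ^ 2*x ^ 2*ξ ^ 2 + (64)*s ^ 2*τ ^ 1*χ ^ 2*x ^ 4*ξ ^ 1 + (-32)*s ^ 2*τ ^ 1*r ^ 4*x ^ 2*ξ ^ 1 + (48)*s ^ 2*τ ^ 1*r ^ 4*x ^ 4 + (-16)*s ^ 2*τ ^ 1*r ^ 4*χ ^ 2*x ^ 2 + (32)*s ^ 2*τ ^ 1*p ^ 2*x ^ 2*ξ ^ 2 + (-128)*s ^ 2*τ ^ 1*p ^ 2*x ^ 4*ξ ^ 1 + (64)*s ^ 2*τ ^ 1*p ^ 2*x ^ 6 + (64)*s ^ 2*τ ^ 1*p ^ 2*χ ^ 2*x ^ 2*ξ ^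 1 + (-32)*s ^ 2*τ ^ 1*p ^ 2*χ ^ 2*x ^ 4 + (8)*s ^ 2*τ ^ 2*x ^ 2*ξ ^ 2 + (96)*s ^ 2*τ ^ 2*x ^ 4*ξ ^ 1 + (-32)*s ^ 2*τ ^ 2*x ^ 6 + (-8)*s ^ 2*τ ^ 2*χ ^ 2*ξ ^ 2 + (-64)*s ^ 2*τ ^ 2*χ ^ 2*x ^ 2*ξ ^ 1 + (16)*s ^ 2*τ ^ 2*χ ^ 2*x ^ 4 + (-16)*s ^ 2*τ ^ 2*r ^ 4*x ^ 2 + (64)*s ^ 2*τ ^ 2*p ^ 2*x ^ 2*ξ ^ 1 + (-96)*s ^ 2*τ ^ 2*p ^ 2*x ^ 4 + (32)*s ^ 2*τ ^ 2*p ^ 2*χ ^ 2*x ^ 2 + (-32)*s ^ 2*τ ^ 3*x ^ 2*ξ ^ 1 + (48)*s ^ 2*τ ^ 3*x ^ 4 + (-16)*s ^ 2*τ ^ 3*χ ^ 2*x ^ 2 + (32)*s ^ 2*τ ^ 3*p ^ 2*x ^ 2 + (-16)*s ^ 2*τ ^ 4*x ^ 2) * hχ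
end
end

section
/- Let σ, τ, t₁, t₂ ∈ ℝ with τ > 0, t₁ + t₂ ≠ 0, and let U₁, U₂ satisfy U₁² = t₁² − σ, U₂² = t₂² − σ. Define x = √τ(U₁ + U₂)/(t₁ + t₂), ξ = (t₁t₂ + σ − U₁U₂)/(t₁ + t₂), μ = √τ(t₂U₁ − t₁U₂)/(t₁ + t₂). Then: (i) μ² = τξ² + σx² − τσ; and (ii) xμ = τξ(t₁ − t₂)/(t₁ + t₂). -/
noncomputable section

/-- Inversion of the tangent-net coordinates: with `x = √τ(U₁ + U₂)/(t₁ + t₂)`,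
`ξ = (t₁t₂ + σ − U₁U₂)/(t₁ + t₂)`, `μ = √τ(t₂U₁ − t₁U₂)/(t₁ + t₂)`, one has
(i) `μ² = τξ² + σx² − τσ` and (ii) `xμ = τξ(t₁ − t₂)/(t₁ + t₂)`. -/
theorem tangent_net_inversion
    (σ τ t₁ t₂ : ℝ) (hτ : 0 < τ) (ht : t₁ + t₂ ≠ 0)
    (U₁ U₂ : ℝ) (hU₁ : U₁ ^ 2 = t₁ ^ 2 - σ) (hU₂ : U₂ ^ 2 = t₂ ^ 2 - σ)
    (x ξ μ : ℝ)
    (hx : x = Real.sqrt τ * (U₁ + U₂) / (t₁ + t₂))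
    (hξ : ξ = (t₁ * t₂ + σ - U₁ * U₂) / (t₁ + t₂))
    (hμ : μ = Real.sqrt τ * (t₂ * U₁ - t₁ * U₂) / (t₁ + t₂)) :
    μ ^ 2 = τ * ξ ^ 2 + σ * x ^ 2 - τ * σ ∧
    x * μ = τ * ξ * (t₁ - t₂) / (t₁ + t₂) := by
  have hs : Real.sqrt τ ^ 2 = τ := Real.sq_sqrt hτ.le
  subst hx hξ hμ
  constructor
  · field_simp
    linear_combination ((t₂*U₁-t₁*U₂)^2 - σ*(U₁+U₂)^2)*hs + τ*(t₂^2-σ-U₂^2)*hU₁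
  · field_simp
    linear_combination (U₁+U₂)*(t₂*U₁-t₁*U₂)*hs + τ*t₂*hU₁ - τ*t₁*hU₂
end
end

section
/- Let m ≠ 0, ℓ, r ≠ 0, s₁ ≠ s₂ be real numbers, and let x, z, R₁, R₂ be real (or complex) numbers satisfying x = r²/(s₁ − s₂), x² + z² = r²(s₁ + s₂)/(s₁ − s₂), R₁R₂ = ℓx − m(x² + z²), and R₁² + R₂² = (1/(r²m))[(ℓx − m(x² + z²))² − x²] + r²m. Then (R₁ + R₂)² = r²Φ(s₂)/(s₁ − s₂)² and (R₁ − R₂)² = r²Φ(s₁)/(s₁ − s₂)², where Φ(s) = 4ms² − 4ℓs + (ℓ² − 1)/m. -/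
noncomputable section

/-- Separation identities (3.10)–(3.12) for the second critical subsystem: under the
listed relations between `x, z, R₁, R₂` and the circle-net coordinates `s₁, s₂`,
`(R₁ + R₂)² = r²Φ(s₂)/(s₁ − s₂)²` and `(R₁ − R₂)² = r²Φ(s₁)/(s₁ − s₂)²`
with `Φ(s) = 4ms² − 4ℓs + (ℓ² − 1)/m`. -/
theorem second_subsystem_separation_identities
    (m ℓ r s₁ s₂ : ℝ) (hm : m ≠ 0) (hr : r ≠ 0) (hs : s₁ ≠ s₂)
    (x z R₁ R₂ : ℂ)
    (hx : x = (r : ℂ) ^ 2 / ((s₁ : ℂ) - (s₂ : ℂ)))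
    (hxz : x ^ 2 + z ^ 2 = (r : ℂ) ^ 2 * ((s₁ : ℂ) + (s₂ : ℂ)) / ((s₁ : ℂ) - (s₂ : ℂ)))
    (hprod : R₁ * R₂ = (ℓ : ℂ) * x - (m : ℂ) * (x ^ 2 + z ^ 2))
    (hsum : R₁ ^ 2 + R₂ ^ 2
      = (1 / ((r : ℂ) ^ 2 * (m : ℂ)))
          * (((ℓ : ℂ) * x - (m : ℂ) * (x ^ 2 + z ^ 2)) ^ 2 - x ^ 2)
        + (r : ℂ) ^ 2 * (m : ℂ)) :
    (R₁ + R₂) ^ 2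
        = (r : ℂ) ^ 2 * ((4 * m * s₂ ^ 2 - 4 * ℓ * s₂ + (ℓ ^ 2 - 1) / m : ℝ) : ℂ)
            / (((s₁ - s₂ : ℝ) : ℂ)) ^ 2 ∧
    (R₁ - R₂) ^ 2
        = (r : ℂ) ^ 2 * ((4 * m * s₁ ^ 2 - 4 * ℓ * s₁ + (ℓ ^ 2 - 1) / m : ℝ) : ℂ)
            / (((s₁ - s₂ : ℝ) : ℂ)) ^ 2 := by
  have hmC : (m : ℂ) ≠ 0 := by exact_mod_cast hm
  have hrC : (r : ℂ) ≠ 0 := by exact_mod_cast hr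
  have hsC : (s₁ : ℂ) - (s₂ : ℂ) ≠ 0 := by
    have : ((s₁ - s₂ : ℝ) : ℂ) ≠ 0 := by exact_mod_cast sub_ne_zero.mpr hs
    simpa using this
  constructor
  · have : (R₁ + R₂) ^ 2 = (R₁ ^ 2 + R₂ ^ 2) + 2 * (R₁ * R₂) := by ring
    rw [this, hsum, hprod, hxz, hx]
    push_cast
    field_simp [hmC, hrC, hsC]
    ring
  · have : (R₁ - R₂) ^ 2 = (R₁ ^ 2 + R₂ ^ 2) - 2 * (R₁ * R₂) := by ring
    rw [this, hsum, hprod, hxz, hx]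
    push_cast
    field_simp [hmC, hrC, hsC]
    ring
end
end

section
/- Let a > b > 0, r² = a² − b², and let t ↦ (ω(t), α(t), β(t)) be a differentiable solution of the Kowalevski two-field equations satisfying the geometric constraints |α|² = a², |β|² = b², α·β = 0, and (in the Kowalevski complex variables, assuming x₁(t) ≠ 0 for all t) the invariant relations of the second critical subsystem x₁x₂w₃ − (x₂z₁w₁ + x₁z₂w₂) = 0 and (x₂/x₁)(w₁² + x₁) − (x₁/x₂)(w₂² + x₂) = 0, with integral values M = m ≠ 0 and L = ℓ, where M = (1/(2r²))[(x₂/x₁)(w₁² + x₁) + (x₁/x₂)(w₂² + x₂)] and L = (1/√(x₁x₂))(w₁w₂ + (x₁x₂ + z₁z₂)M). Define x = √(x₁x₂) = |x₁|, z = √(α₃² + β₃²), s₁ = (x² + z² + r²)/(2x), s₂ = (x² + z² − r²)/(2x). Then the separated variables satisfy (ds₁/dt)² = ¼(s₁² − a²)(−Φ(s₁)) and (ds₂/dt)² = ¼(b² − s₂²)Φ(s₂), where Φ(s) = 4ms² − 4ℓs + (ℓ² − 1)/m. -/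
noncomputable section

/-- `x₁ = (α₁ − β₂) + i(α₂ + β₁)`. -/
def cx1 (a1 a2 b1 b2 : ℝ → ℝ) (t : ℝ) : ℂ :=
  ((a1 t - b2 t : ℝ) : ℂ) + Complex.I * ((a2 t + b1 t : ℝ) : ℂ)

/-- `x₂ = (α₁ − β₂) − i(α₂ + β₁)`. -/
def cx2 (a1 a2 b1 b2 : ℝ → ℝ) (t : ℝ) : ℂ :=
  ((a1 t - b2 t : ℝ) : ℂ) - Complex.I * ((a2 t + b1 t : ℝ) : ℂ)

/-- `z₁ = α₃ + iβ₃`. -/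
def cz1 (a3 b3 : ℝ → ℝ) (t : ℝ) : ℂ := (a3 t : ℂ) + Complex.I * (b3 t : ℂ)

/-- `z₂ = α₃ − iβ₃`. -/
def cz2 (a3 b3 : ℝ → ℝ) (t : ℝ) : ℂ := (a3 t : ℂ) - Complex.I * (b3 t : ℂ)

/-- `w₁ = ω₁ + iω₂`. -/
def cw1 (ω1 ω2 : ℝ → ℝ) (t : ℝ) : ℂ := (ω1 t : ℂ) + Complex.I * (ω2 t : ℂ)

/-- `w₂ = ω₁ − iω₂`. -/
def cw2 (ω1 ω2 : ℝ → ℝ) (t : ℝ) : ℂ := (ω1 t : ℂ) - Complex.I * (ω2 t : ℂ)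

/-- `x = √(x₁x₂) = |x₁|`. -/
def xf (a1 a2 b1 b2 : ℝ → ℝ) (t : ℝ) : ℝ := ‖cx1 a1 a2 b1 b2 t‖

/-- `z = √(α₃² + β₃²)`. -/
def zf (a3 b3 : ℝ → ℝ) (t : ℝ) : ℝ := Real.sqrt (a3 t ^ 2 + b3 t ^ 2)

/-- `s₁ = (x² + z² + r²)/(2x)`. -/
def s1f (r : ℝ) (a1 a2 a3 b1 b2 b3 : ℝ → ℝ) (t : ℝ) : ℝ :=
  (xf a1 a2 b1 b2 t ^ 2 + zf a3 b3 t ^ 2 + r ^ 2) / (2 * xf a1 a2 b1 b2 t)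

/-- `s₂ = (x² + z² − r²)/(2x)`. -/
def s2f (r : ℝ) (a1 a2 a3 b1 b2 b3 : ℝ → ℝ) (t : ℝ) : ℝ :=
  (xf a1 a2 b1 b2 t ^ 2 + zf a3 b3 t ^ 2 - r ^ 2) / (2 * xf a1 a2 b1 b2 t)

private lemma hlp_d (DX DZ S X N4 xv : ℝ) (hxne : xv ≠ 0) (hx2 : xv^2 = X)
    (hN : 2*X*(DX + DZ) - S*DX = N4) :
    ((DX + DZ) * (2*xv) - S * (2*(DX/(2*xv)))) / (2*xv)^2 = N4/(4*X*xv) := by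
  subst hx2
  field_simp
  linear_combination 4*hN

private lemma hlp_s (S X c a xv : ℝ) (hxne : xv ≠ 0) (hx2 : xv^2 = X)
    (hAl : 4*(c) = S^2 - 4*a^2*X) : (S/(2*xv))^2 - a^2 = c/X := by
  subst hx2
  field_simp
  linear_combination -hAl

private lemma hlp_phi (S X c m l xv : ℝ) (hm : m ≠ 0) (hxne : xv ≠ 0) (hx2 : xv^2 = X)
    (hkey : 4*m*(c) + m^2*S^2*X - 2*l*m*S*X*xv + (l^2-1)*X^2 = 0) :
    -(4*m*(S/(2*xv))^2 - 4*l*(S/(2*xv)) + (l^2-1)/m) = 4*(c)/X^2 := by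
  subst hx2
  field_simp
  linear_combination -4*hkey

private lemma hlp_phi' (T X c m l xv : ℝ) (hm : m ≠ 0) (hxne : xv ≠ 0) (hx2 : xv^2 = X)
    (hkey : 4*m*(c) - m^2*T^2*X + 2*l*m*T*X*xv - (l^2-1)*X^2 = 0) :
    4*m*(T/(2*xv))^2 - 4*l*(T/(2*xv)) + (l^2-1)/m = 4*(c)/X^2 := by
  subst hx2
  field_simp
  linear_combination -4*hkey

private lemma hlp_fin (N4 c1 c2 X xv : ℝ) (hxne : xv ≠ 0) (hx2 : xv^2 = X)
    (hcc : N4^2 = 16*(c1*c2)) :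
    (N4/(4*X*xv))^2 = (1/4)*(c1/X)*(4*(c2)/X^2) := by
  subst hx2
  field_simp
  linear_combination hcc

private lemma hlp_s' (T X c b xv : ℝ) (hxne : xv ≠ 0) (hx2 : xv^2 = X)
    (hBe : 4*(c) = 4*b^2*X - T^2) : b^2 - (T/(2*xv))^2 = c/X := by
  subst hx2
  field_simp
  linear_combination -hBe

set_option maxHeartbeats 2000000
set_option maxRecDepth 100000

private theorem kow_core (A1 A2 A3 B1 B2 B3 W1 W2 a b r m l xv : ℝ)
    (hm : m ≠ 0)
    (hr : r^2 = a^2 - b^2)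
    (hE1 : A1^2 + A2^2 + A3^2 = a^2)
    (hE2 : B1^2 + B2^2 + B3^2 = b^2)
    (hE3 : A1*B1 + A2*B2 + A3*B3 = 0)
    (hC1 : ((A1 - B2)*W1 + (A2 + B1)*W2)^2 - ((A1 - B2)*W2 - (A2 + B1)*W1)^2 = ((A1 - B2)^2 + (A2 + B1)^2)*(m*r^2 - (A1 - B2)))
    (hC2 : 2*((A1 - B2)*W1 + (A2 + B1)*W2)*((A1 - B2)*W2 - (A2 + B1)*W1) = ((A1 - B2)^2 + (A2 + B1)^2)*(A2 + B1))
    (hC3 : W1^2 + W2^2 + m*(((A1 - B2)^2 + (A2 + B1)^2) + (A3^2 + B3^2)) = l*xv)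
    (hx2 : xv^2 = ((A1 - B2)^2 + (A2 + B1)^2))
    (hxne : xv ≠ 0) :
    ((((-(2*A3*((A1 - B2)*W2 - (A2 + B1)*W1)) - 2*B3*((A1 - B2)*W1 + (A2 + B1)*W2)) + (2*A3*(A1*W2 - A2*W1) + 2*B3*(B1*W2 - B2*W1))) * (2*xv) - (((A1 - B2)^2 + (A2 + B1)^2) + (A3^2 + B3^2) + r^2) * (2 * ((-(2*A3*((A1 - B2)*W2 - (A2 + B1)*W1)) - 2*B3*((A1 - B2)*W1 + (A2 + B1)*W2)) / (2*xv)))) / (2*xv)^2)^2 = (1/4) * (((((A1 - B2)^2 + (A2 + B1)^2) + (A3^2 + B3^2) + r^2) / (2*xv))^2 - a^2) * (-(4*m*((((A1 - B2)^2 + (A2 + B1)^2) + (A3^2 + B3^2) + r^2) / (2*xv))^2 - 4*l*((((A1 - B2)^2 + (A2 + B1)^2) + (A3^2 + B3^2) + r^2) / (2*xv)) + (l^2 - 1)/m)) ∧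
    ((((-(2*A3*((A1 - B2)*W2 - (A2 + B1)*W1)) - 2*B3*((A1 - B2)*W1 + (A2 + B1)*W2)) + (2*A3*(A1*W2 - A2*W1) + 2*B3*(B1*W2 - B2*W1))) * (2*xv) - (((A1 - B2)^2 + (A2 + B1)^2) + (A3^2 + B3^2) - r^2) * (2 * ((-(2*A3*((A1 - B2)*W2 - (A2 + B1)*W1)) - 2*B3*((A1 - B2)*W1 + (A2 + B1)*W2)) / (2*xv)))) / (2*xv)^2)^2 = (1/4) * (b^2 - ((((A1 - B2)^2 + (A2 + B1)^2) + (A3^2 + B3^2) - r^2) / (2*xv))^2) * (4*m*((((A1 - B2)^2 + (A2 + B1)^2) + (A3^2 + B3^2) - r^2) / (2*xv))^2 - 4*l*((((A1 - B2)^2 + (A2 + B1)^2) + (A3^2 + B3^2) - r^2) / (2*xv)) + (l^2 - 1)/m) := by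
  have hXne : ((A1 - B2)^2 + (A2 + B1)^2) ≠ 0 := hx2 ▸ pow_ne_zero 2 hxne
  have hA' : (A1 - B2)*(A1 + B2) + (A2 + B1)*(A2 - B1) = r^2 - A3^2 + B3^2 := by
    linear_combination hE1 - hE2 - hr
  have hB' : (A1 - B2)*(A2 - B1) - (A2 + B1)*(A1 + B2) = 2*A3*B3 := by
    linear_combination -2*hE3
  have h_uv : (A1 + B2)^2 + (A2 - B1)^2 = 2*(a^2+b^2) - 2*(A3^2 + B3^2) - ((A1 - B2)^2 + (A2 + B1)^2) := by
    linear_combination 2*hE1 + 2*hE2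
  have hAlph : 4*(r^2*A3^2) = (((A1 - B2)^2 + (A2 + B1)^2) + (A3^2 + B3^2) + r^2)^2 - 4*a^2*((A1 - B2)^2 + (A2 + B1)^2) := by
    linear_combination ((A1 - B2)*(A1 + B2)+(A2 + B1)*(A2 - B1) + (r^2-A3^2+B3^2))*hA' + ((A1 - B2)*(A2 - B1)-(A2 + B1)*(A1 + B2)+2*A3*B3)*hB' - ((A1 - B2)^2 + (A2 + B1)^2)*h_uv - 2*((A1 - B2)^2 + (A2 + B1)^2)*hr
  have hBet : 4*(r^2*B3^2) = 4*b^2*((A1 - B2)^2 + (A2 + B1)^2) - (((A1 - B2)^2 + (A2 + B1)^2) + (A3^2 + B3^2) - r^2)^2 := by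
    linear_combination -hAlph - 4*((A1 - B2)^2 + (A2 + B1)^2)*hr
  have hN1 : 2*((A1 - B2)^2 + (A2 + B1)^2)*((-(2*A3*((A1 - B2)*W2 - (A2 + B1)*W1)) - 2*B3*((A1 - B2)*W1 + (A2 + B1)*W2)) + (2*A3*(A1*W2 - A2*W1) + 2*B3*(B1*W2 - B2*W1))) - (((A1 - B2)^2 + (A2 + B1)^2) + (A3^2 + B3^2) + r^2)*(-(2*A3*((A1 - B2)*W2 - (A2 + B1)*W1)) - 2*B3*((A1 - B2)*W1 + (A2 + B1)*W2)) = 4*(r^2*A3*((A1 - B2)*W2 - (A2 + B1)*W1)) := by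
    linear_combination (2*A3*((A1 - B2)*W2 - (A2 + B1)*W1) - 2*B3*((A1 - B2)*W1 + (A2 + B1)*W2))*hA' - (2*A3*((A1 - B2)*W1 + (A2 + B1)*W2) + 2*B3*((A1 - B2)*W2 - (A2 + B1)*W1))*hB'
  have hN2 : 2*((A1 - B2)^2 + (A2 + B1)^2)*((-(2*A3*((A1 - B2)*W2 - (A2 + B1)*W1)) - 2*B3*((A1 - B2)*W1 + (A2 + B1)*W2)) + (2*A3*(A1*W2 - A2*W1) + 2*B3*(B1*W2 - B2*W1))) - (((A1 - B2)^2 + (A2 + B1)^2) + (A3^2 + B3^2) - r^2)*(-(2*A3*((A1 - B2)*W2 - (A2 + B1)*W1)) - 2*B3*((A1 - B2)*W1 + (A2 + B1)*W2)) = -(4*(r^2*B3*((A1 - B2)*W1 + (A2 + B1)*W2))) := by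
    linear_combination (2*A3*((A1 - B2)*W2 - (A2 + B1)*W1) - 2*B3*((A1 - B2)*W1 + (A2 + B1)*W2))*hA' - (2*A3*((A1 - B2)*W1 + (A2 + B1)*W2) + 2*B3*((A1 - B2)*W2 - (A2 + B1)*W1))*hB'
  have hPQ : ((A1 - B2)*W1 + (A2 + B1)*W2)^2 + ((A1 - B2)*W2 - (A2 + B1)*W1)^2 = ((A1 - B2)^2 + (A2 + B1)^2)*(l*xv - m*((A1 - B2)^2 + (A2 + B1)^2) - m*(A3^2 + B3^2)) := by
    linear_combination ((A1 - B2)^2 + (A2 + B1)^2)*hC3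
  have hQ2 : 2*((A1 - B2)*W2 - (A2 + B1)*W1)^2 = ((A1 - B2)^2 + (A2 + B1)^2)*(l*xv - m*((A1 - B2)^2 + (A2 + B1)^2) - m*(A3^2 + B3^2) - m*r^2 + (A1 - B2)) := by
    linear_combination hPQ - hC1
  have hP2 : 2*((A1 - B2)*W1 + (A2 + B1)*W2)^2 = ((A1 - B2)^2 + (A2 + B1)^2)*(l*xv - m*((A1 - B2)^2 + (A2 + B1)^2) - m*(A3^2 + B3^2) + m*r^2 - (A1 - B2)) := by
    linear_combination hPQ + hC1
  have hEs : ((A1 - B2)^2 + (A2 + B1)^2)^2*(l*xv - m*((A1 - B2)^2 + (A2 + B1)^2) - m*(A3^2 + B3^2))^2 = ((A1 - B2)^2 + (A2 + B1)^2)^2*(m^2*r^4 + ((A1 - B2)^2 + (A2 + B1)^2) - 2*m*r^2*(A1 - B2)) := by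
    linear_combination -(((A1 - B2)*W1 + (A2 + B1)*W2)^2+((A1 - B2)*W2 - (A2 + B1)*W1)^2 + ((A1 - B2)^2 + (A2 + B1)^2)*(l*xv - m*((A1 - B2)^2 + (A2 + B1)^2) - m*(A3^2 + B3^2)))*hPQ + (((A1 - B2)*W1 + (A2 + B1)*W2)^2-((A1 - B2)*W2 - (A2 + B1)*W1)^2 + ((A1 - B2)^2 + (A2 + B1)^2)*(m*r^2-(A1 - B2)))*hC1 + (2*((A1 - B2)*W1 + (A2 + B1)*W2)*((A1 - B2)*W2 - (A2 + B1)*W1) + ((A1 - B2)^2 + (A2 + B1)^2)*(A2 + B1))*hC2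
  have hE' : (l*xv - m*((A1 - B2)^2 + (A2 + B1)^2) - m*(A3^2 + B3^2))^2 = m^2*r^4 + ((A1 - B2)^2 + (A2 + B1)^2) - 2*m*r^2*(A1 - B2) :=
    mul_left_cancel₀ (pow_ne_zero 2 hXne) hEs
  have key1 : 4*m*(r^2*((A1 - B2)*W2 - (A2 + B1)*W1)^2) + m^2*(((A1 - B2)^2 + (A2 + B1)^2) + (A3^2 + B3^2) + r^2)^2*((A1 - B2)^2 + (A2 + B1)^2) - 2*l*m*(((A1 - B2)^2 + (A2 + B1)^2) + (A3^2 + B3^2) + r^2)*((A1 - B2)^2 + (A2 + B1)^2)*xv + (l^2-1)*((A1 - B2)^2 + (A2 + B1)^2)^2 = 0 := by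
    linear_combination 2*m*r^2*hQ2 + ((A1 - B2)^2 + (A2 + B1)^2)*hE' - l^2*((A1 - B2)^2 + (A2 + B1)^2)*hx2
  have key2 : 4*m*(r^2*((A1 - B2)*W1 + (A2 + B1)*W2)^2) - m^2*(((A1 - B2)^2 + (A2 + B1)^2) + (A3^2 + B3^2) - r^2)^2*((A1 - B2)^2 + (A2 + B1)^2) + 2*l*m*(((A1 - B2)^2 + (A2 + B1)^2) + (A3^2 + B3^2) - r^2)*((A1 - B2)^2 + (A2 + B1)^2)*xv - (l^2-1)*((A1 - B2)^2 + (A2 + B1)^2)^2 = 0 := by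
    linear_combination 2*m*r^2*hP2 - ((A1 - B2)^2 + (A2 + B1)^2)*hE' + l^2*((A1 - B2)^2 + (A2 + B1)^2)*hx2
  constructor
  · rw [hlp_d (-(2*A3*((A1 - B2)*W2 - (A2 + B1)*W1)) - 2*B3*((A1 - B2)*W1 + (A2 + B1)*W2)) (2*A3*(A1*W2 - A2*W1) + 2*B3*(B1*W2 - B2*W1)) (((A1 - B2)^2 + (A2 + B1)^2) + (A3^2 + B3^2) + r^2) ((A1 - B2)^2 + (A2 + B1)^2) (4*(r^2*A3*((A1 - B2)*W2 - (A2 + B1)*W1))) xv hxne hx2 hN1,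
        hlp_s (((A1 - B2)^2 + (A2 + B1)^2) + (A3^2 + B3^2) + r^2) ((A1 - B2)^2 + (A2 + B1)^2) (r^2*A3^2) a xv hxne hx2 hAlph,
        hlp_phi (((A1 - B2)^2 + (A2 + B1)^2) + (A3^2 + B3^2) + r^2) ((A1 - B2)^2 + (A2 + B1)^2) (r^2*((A1 - B2)*W2 - (A2 + B1)*W1)^2) m l xv hm hxne hx2 key1]
    exact hlp_fin (4*(r^2*A3*((A1 - B2)*W2 - (A2 + B1)*W1))) (r^2*A3^2) (r^2*((A1 - B2)*W2 - (A2 + B1)*W1)^2) ((A1 - B2)^2 + (A2 + B1)^2) xv hxne hx2 (by ring)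
  · rw [hlp_d (-(2*A3*((A1 - B2)*W2 - (A2 + B1)*W1)) - 2*B3*((A1 - B2)*W1 + (A2 + B1)*W2)) (2*A3*(A1*W2 - A2*W1) + 2*B3*(B1*W2 - B2*W1)) (((A1 - B2)^2 + (A2 + B1)^2) + (A3^2 + B3^2) - r^2) ((A1 - B2)^2 + (A2 + B1)^2) (-(4*(r^2*B3*((A1 - B2)*W1 + (A2 + B1)*W2)))) xv hxne hx2 hN2,
        hlp_s' (((A1 - B2)^2 + (A2 + B1)^2) + (A3^2 + B3^2) - r^2) ((A1 - B2)^2 + (A2 + B1)^2) (r^2*B3^2) b xv hxne hx2 hBet,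
        hlp_phi' (((A1 - B2)^2 + (A2 + B1)^2) + (A3^2 + B3^2) - r^2) ((A1 - B2)^2 + (A2 + B1)^2) (r^2*((A1 - B2)*W1 + (A2 + B1)*W2)^2) m l xv hm hxne hx2 key2]
    exact hlp_fin (-(4*(r^2*B3*((A1 - B2)*W1 + (A2 + B1)*W2)))) (r^2*B3^2) (r^2*((A1 - B2)*W1 + (A2 + B1)*W2)^2) ((A1 - B2)^2 + (A2 + B1)^2) xv hxne hx2 (by ring)


/-- On the second critical subsystem (invariant relations below) with integral values
`M = m`, `L = ℓ`, the circle-net variables `s₁, s₂` satisfy the separated equations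
`(ds₁/dt)² = ¼(s₁² − a²)(−Φ(s₁))` and `(ds₂/dt)² = ¼(b² − s₂²)Φ(s₂)`,
where `Φ(s) = 4ms² − 4ℓs + (ℓ² − 1)/m`. -/
theorem second_subsystem_separated_equations
    (a b r m ℓ : ℝ) (hb : 0 < b) (hab : b < a)
    (hr : r ^ 2 = a ^ 2 - b ^ 2) (hm : m ≠ 0)
    (ω1 ω2 ω3 a1 a2 a3 b1 b2 b3 : ℝ → ℝ)
    (hsol : KowSol ω1 ω2 ω3 a1 a2 a3 b1 b2 b3)
    (hga : ∀ t, a1 t ^ 2 + a2 t ^ 2 + a3 t ^ 2 = a ^ 2)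
    (hgb : ∀ t, b1 t ^ 2 + b2 t ^ 2 + b3 t ^ 2 = b ^ 2)
    (hgab : ∀ t, a1 t * b1 t + a2 t * b2 t + a3 t * b3 t = 0)
    (hx0 : ∀ t, cx1 a1 a2 b1 b2 t ≠ 0)
    (hrel1 : ∀ t,
      cx1 a1 a2 b1 b2 t * cx2 a1 a2 b1 b2 t * (ω3 t : ℂ)
        - (cx2 a1 a2 b1 b2 t * cz1 a3 b3 t * cw1 ω1 ω2 t
            + cx1 a1 a2 b1 b2 t * cz2 a3 b3 t * cw2 ω1 ω2 t) = 0)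
    (hrel2 : ∀ t,
      (cx2 a1 a2 b1 b2 t / cx1 a1 a2 b1 b2 t) * (cw1 ω1 ω2 t ^ 2 + cx1 a1 a2 b1 b2 t)
        - (cx1 a1 a2 b1 b2 t / cx2 a1 a2 b1 b2 t) * (cw2 ω1 ω2 t ^ 2 + cx2 a1 a2 b1 b2 t)
        = 0)
    (hM : ∀ t,
      (1 / (2 * (r : ℂ) ^ 2))
        * ((cx2 a1 a2 b1 b2 t / cx1 a1 a2 b1 b2 t) * (cw1 ω1 ω2 t ^ 2 + cx1 a1 a2 b1 b2 t)
          + (cx1 a1 a2 b1 b2 t / cx2 a1 a2 b1 b2 t) * (cw2 ω1 ω2 t ^ 2 + cx2 a1 a2 b1 b2 t))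
        = (m : ℂ))
    (hL : ∀ t,
      (1 / (xf a1 a2 b1 b2 t : ℂ))
        * (cw1 ω1 ω2 t * cw2 ω1 ω2 t
          + (cx1 a1 a2 b1 b2 t * cx2 a1 a2 b1 b2 t + cz1 a3 b3 t * cz2 a3 b3 t) * (m : ℂ))
        = (ℓ : ℂ)) :
    ∀ t,
      (deriv (s1f r a1 a2 a3 b1 b2 b3) t) ^ 2
        = (1 / 4) * ((s1f r a1 a2 a3 b1 b2 b3 t) ^ 2 - a ^ 2)
          * (-(4 * m * (s1f r a1 a2 a3 b1 b2 b3 t) ^ 2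
              - 4 * ℓ * (s1f r a1 a2 a3 b1 b2 b3 t) + (ℓ ^ 2 - 1) / m)) ∧
      (deriv (s2f r a1 a2 a3 b1 b2 b3) t) ^ 2
        = (1 / 4) * (b ^ 2 - (s2f r a1 a2 a3 b1 b2 b3 t) ^ 2)
          * (4 * m * (s2f r a1 a2 a3 b1 b2 b3 t) ^ 2
              - 4 * ℓ * (s2f r a1 a2 a3 b1 b2 b3 t) + (ℓ ^ 2 - 1) / m) := by
  obtain ⟨hw1, hw2, hw3, hda1, hda2, hda3, hdb1, hdb2, hdb3⟩ := hsol
  -- pointwise rewriting of xf as a real sqrt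
  have hxfun : ∀ s, xf a1 a2 b1 b2 s
      = Real.sqrt ((a1 s - b2 s)^2 + (a2 s + b1 s)^2) := by
    intro s
    simp only [xf, Complex.norm_def, Complex.normSq_apply]
    congr 1
    simp [cx1]
    ring
  have hfun1 : s1f r a1 a2 a3 b1 b2 b3 = fun s =>
      ((a1 s - b2 s)^2 + (a2 s + b1 s)^2 + (a3 s^2 + b3 s^2) + r^2)
        / (2 * Real.sqrt ((a1 s - b2 s)^2 + (a2 s + b1 s)^2)) := by
    funext s
    simp only [s1f, zf, hxfun s]
    rw [Real.sq_sqrt (by positivity), Real.sq_sqrt (by positivity)]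
  have hfun2 : s2f r a1 a2 a3 b1 b2 b3 = fun s =>
      ((a1 s - b2 s)^2 + (a2 s + b1 s)^2 + (a3 s^2 + b3 s^2) - r^2)
        / (2 * Real.sqrt ((a1 s - b2 s)^2 + (a2 s + b1 s)^2)) := by
    funext s
    simp only [s2f, zf, hxfun s]
    rw [Real.sq_sqrt (by positivity), Real.sq_sqrt (by positivity)]
  have hrpos : (0:ℝ) < r^2 := by rw [hr]; nlinarith
  have hrne : r ≠ 0 := by
    intro h; rw [h] at hrpos; simp at hrpos
  intro t
  -- positivity of x² = |x₁|²
  have hXpos : (0:ℝ) < (((a1 t) - (b2 t))^2 + ((a2 t) + (b1 t))^2) := by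
    have h := Complex.normSq_pos.mpr (hx0 t)
    have hre : (cx1 a1 a2 b1 b2 t).re = a1 t - b2 t := by simp [cx1]
    have him : (cx1 a1 a2 b1 b2 t).im = a2 t + b1 t := by simp [cx1]
    rw [Complex.normSq_apply, hre, him] at h
    nlinarith [h]
  have hx2 : (Real.sqrt (((a1 t) - (b2 t))^2 + ((a2 t) + (b1 t))^2))^2 = (((a1 t) - (b2 t))^2 + ((a2 t) + (b1 t))^2) := Real.sq_sqrt hXpos.le
  have hxne : (Real.sqrt (((a1 t) - (b2 t))^2 + ((a2 t) + (b1 t))^2)) ≠ 0 := ne_of_gt (Real.sqrt_pos.mpr hXpos)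
  -- extraction of the real invariant relations
  have hcx2c : cx2 a1 a2 b1 b2 t = (starRingEnd ℂ) (cx1 a1 a2 b1 b2 t) := by
    simp [cx1, cx2, map_add, map_mul, Complex.conj_I, Complex.conj_ofReal]
    ring
  have hcx2ne : cx2 a1 a2 b1 b2 t ≠ 0 := by
    rw [hcx2c]; simpa using hx0 t
  have hrc : ((r:ℝ):ℂ) ≠ 0 := Complex.ofReal_ne_zero.mpr hrne
  have hxfposr : (0:ℝ) < xf a1 a2 b1 b2 t := by
    rw [hxfun t]; exact Real.sqrt_pos.mpr hXpos
  have hxfc : ((xf a1 a2 b1 b2 t : ℝ):ℂ) ≠ 0 := Complex.ofReal_ne_zero.mpr (ne_of_gt hxfposr)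
  have h2 := hrel2 t
  have hMt := hM t
  have hLt := hL t
  field_simp [hx0 t, hcx2ne, hrc] at h2 hMt
  field_simp [hxfc] at hLt
  have hM2 : cx2 a1 a2 b1 b2 t * (cw1 ω1 ω2 t ^ 2 + cx1 a1 a2 b1 b2 t) * cx2 a1 a2 b1 b2 t
      = (m:ℂ) * (r:ℂ)^2 * (cx1 a1 a2 b1 b2 t * cx2 a1 a2 b1 b2 t) := by
    linear_combination (1/2 : ℂ) * h2 + (1/2 : ℂ) * hMt
  rw [Complex.ext_iff] at hM2 hLt
  obtain ⟨hM2re, hM2im⟩ := hM2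
  obtain ⟨hLre, -⟩ := hLt
  simp only [pow_two, cx1, cx2, cw1, cw2, cz1, cz2, Complex.add_re, Complex.add_im,
    Complex.mul_re, Complex.mul_im, Complex.sub_re, Complex.sub_im, Complex.I_re,
    Complex.I_im, Complex.ofReal_re, Complex.ofReal_im] at hM2re hM2im hLre
  rw [hxfun t] at hLre
  have hC1 : (((a1 t) - (b2 t))*(ω1 t) + ((a2 t) + (b1 t))*(ω2 t))^2 - (((a1 t) - (b2 t))*(ω2 t) - ((a2 t) + (b1 t))*(ω1 t))^2 = (((a1 t) - (b2 t))^2 + ((a2 t) + (b1 t))^2)*(m*r^2 - ((a1 t) - (b2 t))) := by linear_combination hM2re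
  have hC2 : 2*(((a1 t) - (b2 t))*(ω1 t) + ((a2 t) + (b1 t))*(ω2 t))*(((a1 t) - (b2 t))*(ω2 t) - ((a2 t) + (b1 t))*(ω1 t)) = (((a1 t) - (b2 t))^2 + ((a2 t) + (b1 t))^2)*((a2 t) + (b1 t)) := by linear_combination hM2im
  have hC3 : (ω1 t)^2 + (ω2 t)^2 + m*((((a1 t) - (b2 t))^2 + ((a2 t) + (b1 t))^2) + ((a3 t)^2 + (b3 t)^2)) = ℓ*(Real.sqrt (((a1 t) - (b2 t))^2 + ((a2 t) + (b1 t))^2)) := by linear_combination hLre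
  -- derivatives
  have hXd : HasDerivAt (fun s => (a1 s - b2 s)^2 + (a2 s + b1 s)^2)
      (-(2*(a3 t)*(((a1 t) - (b2 t))*(ω2 t) - ((a2 t) + (b1 t))*(ω1 t))) - 2*(b3 t)*(((a1 t) - (b2 t))*(ω1 t) + ((a2 t) + (b1 t))*(ω2 t))) t := by
    have h1 := (((hda1 t).sub (hdb2 t)).pow 2).add (((hda2 t).add (hdb1 t)).pow 2)
    refine h1.congr_deriv ?_
    simp
    ring
  have hZd : HasDerivAt (fun s => a3 s^2 + b3 s^2)
      (2*(a3 t)*((a1 t)*(ω2 t) - (a2 t)*(ω1 t)) + 2*(b3 t)*((b1 t)*(ω2 t) - (b2 t)*(ω1 t))) t := by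
    have h1 := ((hda3 t).pow 2).add ((hdb3 t).pow 2)
    refine h1.congr_deriv ?_
    simp
  have hden : (2 * Real.sqrt ((a1 t - b2 t)^2 + (a2 t + b1 t)^2)) ≠ 0 := by positivity
  have hs1' : HasDerivAt (fun s =>
      ((a1 s - b2 s)^2 + (a2 s + b1 s)^2 + (a3 s^2 + b3 s^2) + r^2)
        / (2 * Real.sqrt ((a1 s - b2 s)^2 + (a2 s + b1 s)^2)))
      ((((-(2*(a3 t)*(((a1 t) - (b2 t))*(ω2 t) - ((a2 t) + (b1 t))*(ω1 t))) - 2*(b3 t)*(((a1 t) - (b2 t))*(ω1 t) + ((a2 t) + (b1 t))*(ω2 t))) + (2*(a3 t)*((a1 t)*(ω2 t) - (a2 t)*(ω1 t)) + 2*(b3 t)*((b1 t)*(ω2 t) - (b2 t)*(ω1 t)))) * (2*(Real.sqrt (((a1 t) - (b2 t))^2 + ((a2 t) + (b1 t))^2)))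
        - ((((a1 t) - (b2 t))^2 + ((a2 t) + (b1 t))^2) + ((a3 t)^2 + (b3 t)^2) + r^2) * (2 * ((-(2*(a3 t)*(((a1 t) - (b2 t))*(ω2 t) - ((a2 t) + (b1 t))*(ω1 t))) - 2*(b3 t)*(((a1 t) - (b2 t))*(ω1 t) + ((a2 t) + (b1 t))*(ω2 t))) / (2*(Real.sqrt (((a1 t) - (b2 t))^2 + ((a2 t) + (b1 t))^2)))))) / (2*(Real.sqrt (((a1 t) - (b2 t))^2 + ((a2 t) + (b1 t))^2)))^2) t :=
    ((hXd.add hZd).add_const (r^2)).div ((hXd.sqrt (ne_of_gt hXpos)).const_mul 2) hden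
  have hs2' : HasDerivAt (fun s =>
      ((a1 s - b2 s)^2 + (a2 s + b1 s)^2 + (a3 s^2 + b3 s^2) - r^2)
        / (2 * Real.sqrt ((a1 s - b2 s)^2 + (a2 s + b1 s)^2)))
      ((((-(2*(a3 t)*(((a1 t) - (b2 t))*(ω2 t) - ((a2 t) + (b1 t))*(ω1 t))) - 2*(b3 t)*(((a1 t) - (b2 t))*(ω1 t) + ((a2 t) + (b1 t))*(ω2 t))) + (2*(a3 t)*((a1 t)*(ω2 t) - (a2 t)*(ω1 t)) + 2*(b3 t)*((b1 t)*(ω2 t) - (b2 t)*(ω1 t)))) * (2*(Real.sqrt (((a1 t) - (b2 t))^2 + ((a2 t) + (b1 t))^2)))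
        - ((((a1 t) - (b2 t))^2 + ((a2 t) + (b1 t))^2) + ((a3 t)^2 + (b3 t)^2) - r^2) * (2 * ((-(2*(a3 t)*(((a1 t) - (b2 t))*(ω2 t) - ((a2 t) + (b1 t))*(ω1 t))) - 2*(b3 t)*(((a1 t) - (b2 t))*(ω1 t) + ((a2 t) + (b1 t))*(ω2 t))) / (2*(Real.sqrt (((a1 t) - (b2 t))^2 + ((a2 t) + (b1 t))^2)))))) / (2*(Real.sqrt (((a1 t) - (b2 t))^2 + ((a2 t) + (b1 t))^2)))^2) t :=
    ((hXd.add hZd).sub_const (r^2)).div ((hXd.sqrt (ne_of_gt hXpos)).const_mul 2) hden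
  simp only [hfun1, hfun2]
  rw [hs1'.deriv, hs2'.deriv]
  have hcore := kow_core (a1 t) (a2 t) (a3 t) (b1 t) (b2 t) (b3 t) (ω1 t) (ω2 t)
    a b r m ℓ (Real.sqrt (((a1 t) - (b2 t))^2 + ((a2 t) + (b1 t))^2)) hm hr (hga t) (hgb t) (hgab t) hC1 hC2 hC3 hx2 hxne
  exact ⟨hcore.1, hcore.2⟩
end
end
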